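/- Let X be an infinite locally finite extended metric space. Then X is amenable but not properly amenable if and only if X decomposes as X = Y₁ ⊔ Y₂ where Y₁ is a finite non-empty subset, Y₂ is non-amenable, and d(x,y) = ∞ for all x ∈ Y₁, y ∈ Y₂. -/

import Mathlib

open Set

/-- An extended metric space is locally finite if every set of finite diameter
(every closed ball of finite radius) is finite. -/
def LocallyFiniteEMS (X : Type*) [EMetricSpace X] : Prop :=
  ∀ (x : X) (R : ℝ), {y : X | edist x y ≤ ENNReal.ofReal R}.Finite

/-- The `R`-boundary of a set `F` in an extended metric space. -/
def rBoundary {X : Type*} [EMetricSpace X] (R : ℝ) (F : Set X) : Set X :=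
  {x : X | (∃ y ∈ F, edist x y ≤ ENNReal.ofReal R) ∧
           (∃ y ∉ F, edist x y ≤ ENNReal.ofReal R)}

/-- `F` is an `(R, ε)`-Følner set: finite, nonempty, with `|∂_R F| ≤ ε·|F|`. -/
def IsFolnerSet {X : Type*} [EMetricSpace X] (R ε : ℝ) (F : Set X) : Prop :=
  F.Finite ∧ F.Nonempty ∧ ((rBoundary R F).ncard : ℝ) ≤ ε * F.ncard

/-- Amenability of an extended metric space. -/
def Amenable (X : Type*) [EMetricSpace X] : Prop :=
  ∀ R > (0:ℝ), ∀ ε > (0:ℝ), ∃ F : Set X, IsFolnerSet R ε F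

/-- Proper amenability of an extended metric space. -/
def ProperlyAmenable (X : Type*) [EMetricSpace X] : Prop :=
  ∀ R > (0:ℝ), ∀ ε > (0:ℝ), ∀ A : Set X, A.Finite →
    ∃ F : Set X, IsFolnerSet R ε F ∧ A ⊆ F

/-- `t` is a partial translation with domain `A` and range `B`: a bijection from `A`
onto `B` whose graph is controlled, i.e. `sup_{x ∈ A} d(x, t x) < ∞`. -/
def IsPartialTranslation {X : Type*} [EMetricSpace X] (A B : Set X) (t : X → X) : Prop :=
  Set.BijOn t A B ∧ ∃ C : ℝ, ∀ x ∈ A, edist x (t x) ≤ ENNReal.ofReal C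

/-- A paradoxical decomposition of `X`: a partition `X = X₊ ⊔ X₋` together with partial
translations `t₊ : X → X₊`, `t₋ : X → X₋` defined on all of `X`. -/
def Paradoxical (X : Type*) [EMetricSpace X] : Prop :=
  ∃ (Xp Xm : Set X) (tp tm : X → X),
    Xp ∪ Xm = Set.univ ∧ Disjoint Xp Xm ∧
    IsPartialTranslation Set.univ Xp tp ∧ IsPartialTranslation Set.univ Xm tm

set_option linter.unusedSectionVars false

namespace Stmt6Aux

variable {X : Type*} [EMetricSpace X]

/-- `F` is closed under moving distance `≤ R`. -/
def Isol (R : ℝ) (F : Set X) : Prop :=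
  ∀ x ∈ F, ∀ y : X, edist x y ≤ ENNReal.ofReal R → y ∈ F

lemma Isol.mono {R R' : ℝ} (h : R ≤ R') {F : Set X} (hF : Isol R' F) : Isol R F :=
  fun x hx y hxy => hF x hx y (hxy.trans (ENNReal.ofReal_le_ofReal h))

lemma Isol.boundary_empty {R : ℝ} {F : Set X} (h : Isol R F) : rBoundary R F = ∅ := by
  ext x
  simp only [rBoundary, mem_setOf_eq, mem_empty_iff_false, iff_false, not_and]
  rintro ⟨y, hy, hxy⟩ ⟨z, hz, hxz⟩
  by_cases hx : x ∈ F
  · exact hz (h x hx z hxz)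
  · exact hx (h y hy x (by rwa [edist_comm] at hxy))

lemma isol_of_boundary_empty {R : ℝ} {F : Set X} (h : rBoundary R F = ∅) : Isol R F := by
  intro x hx y hxy
  by_contra hy
  have hmem : x ∈ rBoundary R F :=
    ⟨⟨x, hx, by simp [edist_self]⟩, ⟨y, hy, hxy⟩⟩
  rw [h] at hmem; exact hmem

lemma Isol.folner {R₀ R ε : ℝ} (hR : R₀ ≤ R) (hε : 0 ≤ ε) {F : Set X}
    (hfin : F.Finite) (hne : F.Nonempty) (h : Isol R F) : IsFolnerSet R₀ ε F := by
  refine ⟨hfin, hne, ?_⟩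
  rw [(h.mono hR).boundary_empty]
  simpa using mul_nonneg hε (Nat.cast_nonneg _)

lemma isol_biUnion {R : ℝ} {S : Set X} {f : X → Set X} (h : ∀ x ∈ S, Isol R (f x)) :
    Isol R (⋃ x ∈ S, f x) := by
  intro a ha b hab
  simp only [mem_iUnion, exists_prop] at ha ⊢
  obtain ⟨x, hx, hax⟩ := ha
  exact ⟨x, hx, h x hx a hax b hab⟩

def erel (R : ℝ) (a b : X) : Prop := edist a b ≤ ENNReal.ofReal R

def comp' (R : ℝ) (x : X) : Set X := {y | Relation.ReflTransGen (erel R) x y}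

lemma mem_comp'_self (R : ℝ) (x : X) : x ∈ comp' R x := Relation.ReflTransGen.refl

lemma comp'_isol (R : ℝ) (x : X) : Isol R (comp' R x) :=
  fun _ hy _ hz => Relation.ReflTransGen.tail hy hz

lemma comp'_mono {R R' : ℝ} (h : R ≤ R') (x : X) : comp' R x ⊆ comp' R' x :=
  fun _ hy => Relation.ReflTransGen.mono (r := erel R) (p := erel R')
    (fun _ _ hab => hab.trans (ENNReal.ofReal_le_ofReal h)) _ _ hy

lemma comp'_subset_of_isol {R : ℝ} {F : Set X} (hF : Isol R F) {x : X} (hx : x ∈ F) :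
    comp' R x ⊆ F := by
  intro y hy
  induction hy with
  | refl => exact hx
  | tail _ h ih => exact hF _ ih _ h

lemma mem_comp'_of_edist_le {R : ℝ} {x y : X} (h : edist x y ≤ ENNReal.ofReal R) :
    y ∈ comp' R x := Relation.ReflTransGen.single h

/-- the set of points at finite distance from `x` -/
def compI (x : X) : Set X := {y | edist x y ≠ ⊤}

lemma mem_compI_self (x : X) : x ∈ compI x := by simp [compI]

lemma compI_isol (R : ℝ) (x : X) : Isol R (compI x) := by
  intro a ha b hab
  exact (lt_of_le_of_lt (edist_triangle x a b)
    (ENNReal.add_lt_top.2 ⟨Ne.lt_top ha, lt_of_le_of_lt hab ENNReal.ofReal_lt_top⟩)).ne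

lemma compI_subset_of_ne_top {x y : X} (h : edist x y ≠ ⊤) : compI y ⊆ compI x := by
  intro z hz
  exact (lt_of_le_of_lt (edist_triangle x y z)
    (ENNReal.add_lt_top.2 ⟨Ne.lt_top h, Ne.lt_top hz⟩)).ne

lemma finite_of_forall_finite_subset_ncard_le {T : Set X} {N : ℕ}
    (h : ∀ S : Set X, S ⊆ T → S.Finite → S.ncard ≤ N) : T.Finite := by
  by_contra hT
  obtain ⟨S, hS, hfin, hcard⟩ := Set.Infinite.exists_subset_ncard_eq hT (N + 1)
  have := h S hS hfin
  omega

lemma exists_mem_of_antitone {U : ℕ → Set X} (hdec : ∀ m n : ℕ, m ≤ n → U n ⊆ U m)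
    (hfin : (U 0).Finite) (hne : ∀ n, (U n).Nonempty) : ∃ x, ∀ n, x ∈ U n := by
  by_contra h
  push_neg at h
  choose f hf using h
  classical
  set N := hfin.toFinset.sup f with hN
  obtain ⟨x, hx⟩ := hne N
  have hx0 : x ∈ hfin.toFinset := hfin.mem_toFinset.2 (hdec 0 N (Nat.zero_le N) hx)
  exact hf x (hdec (f x) N (Finset.le_sup hx0) hx)

lemma bdry_finite (hlf : LocallyFiniteEMS X) {F : Set X} (hF : F.Finite) (R : ℝ) :
    (rBoundary R F).Finite := by
  refine (hF.biUnion (fun y _ => hlf y R)).subset ?_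
  rintro x ⟨⟨y, hy, hxy⟩, -⟩
  exact mem_biUnion hy (by rw [mem_setOf_eq, edist_comm]; exact hxy)

lemma rBoundary_mono {R R' : ℝ} (h : R ≤ R') (F : Set X) :
    rBoundary R F ⊆ rBoundary R' F := by
  rintro x ⟨⟨y, hy, hxy⟩, ⟨z, hz, hxz⟩⟩
  exact ⟨⟨y, hy, hxy.trans (ENNReal.ofReal_le_ofReal h)⟩,
    ⟨z, hz, hxz.trans (ENNReal.ofReal_le_ofReal h)⟩⟩

lemma folner_mono (hlf : LocallyFiniteEMS X) {R R' ε ε' : ℝ} (hR : R ≤ R') (hε : ε' ≤ ε)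
    {F : Set X} (h : IsFolnerSet R' ε' F) : IsFolnerSet R ε F := by
  obtain ⟨h1, h2, h3⟩ := h
  refine ⟨h1, h2, ?_⟩
  have hsub := Set.ncard_le_ncard (rBoundary_mono hR F) (bdry_finite hlf h1 R')
  calc ((rBoundary R F).ncard : ℝ) ≤ (rBoundary R' F).ncard := Nat.cast_le.2 hsub
    _ ≤ ε' * F.ncard := h3
    _ ≤ ε * F.ncard := mul_le_mul_of_nonneg_right hε (Nat.cast_nonneg _)

lemma hlf_subtype (hlf : LocallyFiniteEMS X) (Y : Set X) : LocallyFiniteEMS ↥Y := by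
  intro x R
  have heq : {y : ↥Y | edist x y ≤ ENNReal.ofReal R}
      = Subtype.val ⁻¹' {y : X | edist (x : X) y ≤ ENNReal.ofReal R} := by
    ext y; simp [Subtype.edist_eq]
  rw [heq]
  exact Set.Finite.preimage (Subtype.val_injective.injOn) (hlf x R)

lemma boundary_preimage_subset {Y : Set X} (R : ℝ) (F : Set X) :
    Subtype.val '' rBoundary R ((Subtype.val : ↥Y → X) ⁻¹' F) ⊆ rBoundary R F := by
  rintro _ ⟨⟨x, hxY⟩, ⟨⟨⟨y, hyY⟩, hyG, hxy⟩, ⟨⟨z, hzY⟩, hzG, hxz⟩⟩, rfl⟩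
  rw [Subtype.edist_eq] at hxy hxz
  exact ⟨⟨y, hyG, hxy⟩, ⟨z, hzG, hxz⟩⟩

lemma boundary_image_subset {Y : Set X}
    (hcross : ∀ x ∈ Y, ∀ y, y ∉ Y → edist x y = ⊤) (R : ℝ) (G : Set ↥Y) :
    rBoundary R (Subtype.val '' G) ⊆ Subtype.val '' rBoundary R G := by
  rintro x ⟨⟨y, ⟨⟨y', hy'⟩, hyG, rfl⟩, hxy⟩, ⟨z, hz, hxz⟩⟩
  have hxY : x ∈ Y := by
    by_contra hx
    have ht := hcross y' hy' x hx
    rw [edist_comm] at ht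
    rw [ht] at hxy; simp at hxy
  have hzY : z ∈ Y := by
    by_contra hzY
    have ht := hcross x hxY z hzY
    rw [ht] at hxz; simp at hxz
  have hzG : (⟨z, hzY⟩ : ↥Y) ∉ G := fun h => hz ⟨⟨z, hzY⟩, h, rfl⟩
  exact ⟨⟨x, hxY⟩, ⟨⟨⟨y', hy'⟩, hyG, by rw [Subtype.edist_eq]; exact hxy⟩,
    ⟨⟨z, hzY⟩, hzG, by rw [Subtype.edist_eq]; exact hxz⟩⟩, rfl⟩

lemma folner_image {Y : Set X} (hlfY : LocallyFiniteEMS ↥Y)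
    (hcross : ∀ x ∈ Y, ∀ y, y ∉ Y → edist x y = ⊤)
    {R ε : ℝ} {G : Set ↥Y} (h : IsFolnerSet R ε G) :
    IsFolnerSet R ε (Subtype.val '' G) := by
  obtain ⟨h1, h2, h3⟩ := h
  refine ⟨h1.image _, h2.image _, ?_⟩
  have hbfin : (rBoundary R G).Finite := bdry_finite hlfY h1 R
  have hle : (rBoundary R (Subtype.val '' G)).ncard ≤ (rBoundary R G).ncard := by
    calc (rBoundary R (Subtype.val '' G)).ncard
        ≤ (Subtype.val '' rBoundary R G).ncard :=
          Set.ncard_le_ncard (boundary_image_subset hcross R G) (hbfin.image _)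
      _ = (rBoundary R G).ncard := Set.ncard_image_of_injective _ Subtype.val_injective
  rw [Set.ncard_image_of_injective _ Subtype.val_injective]
  exact le_trans (Nat.cast_le.2 hle) h3

lemma core {Z : Type*} [EMetricSpace Z] (hlf : LocallyFiniteEMS Z)
    {R₀ ε₁ : ℝ} (hR₀ : 0 < R₀) (hε₁ : 0 < ε₁) (N : ℕ)
    (hbd : ∀ F : Set Z, IsFolnerSet R₀ ε₁ F → F.ncard ≤ N)
    (ham : Amenable Z) :
    ∃ x : Z, (compI x).Finite := by
  have hRn : ∀ n : ℕ, R₀ ≤ R₀ + n := fun n => by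
    have h0 : (0:ℝ) ≤ n := Nat.cast_nonneg n; linarith
  have key : ∀ (n : ℕ) (F : Set Z), F.Finite → F.Nonempty → Isol (R₀ + n) F → F.ncard ≤ N :=
    fun n F h1 h2 h3 => hbd F (h3.folner (hRn n) hε₁.le h1 h2)
  set U : ℕ → Set Z := fun n => {x | (comp' (R₀ + n) x).Finite} with hU
  have hUfin : ∀ n, (U n).Finite := by
    intro n
    apply finite_of_forall_finite_subset_ncard_le (N := N)
    intro S hS hSfin
    rcases S.eq_empty_or_nonempty with rfl | hSne
    · simp
    have hWfin : (⋃ x ∈ S, comp' (R₀ + n) x).Finite := hSfin.biUnion (fun x hx => hS hx)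
    have hsub : S ⊆ ⋃ x ∈ S, comp' (R₀ + n) x :=
      fun x hx => mem_biUnion hx (mem_comp'_self _ _)
    have hWcard := key n _ hWfin (hSne.mono hsub)
      (isol_biUnion (fun x _ => comp'_isol _ _))
    exact le_trans (Set.ncard_le_ncard hsub hWfin) hWcard
  have hUne : ∀ n, (U n).Nonempty := by
    intro n
    set ε' := min ε₁ (1 / (N + 1)) with hε'
    have hε'pos : 0 < ε' := lt_min hε₁ (by positivity)
    obtain ⟨F, hF⟩ := ham (R₀ + n) (lt_of_lt_of_le hR₀ (hRn n)) ε' hε'pos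
    have hF0 : IsFolnerSet R₀ ε₁ F := folner_mono hlf (hRn n) (min_le_left _ _) hF
    have hFN : F.ncard ≤ N := hbd F hF0
    have hbfin : (rBoundary (R₀ + n) F).Finite := bdry_finite hlf hF.1 _
    have hbe : rBoundary (R₀ + n) F = ∅ := by
      by_contra hne
      have h1 : 1 ≤ ((rBoundary (R₀ + n) F).ncard : ℝ) := by
        have hpos : 0 < (rBoundary (R₀ + n) F).ncard :=
          (Set.ncard_pos hbfin).2 (Set.nonempty_iff_ne_empty.2 hne)
        exact_mod_cast hpos
      have h2 : ((rBoundary (R₀ + n) F).ncard : ℝ) ≤ ε' * F.ncard := hF.2.2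
      have h3 : ε' * F.ncard ≤ (1/((N:ℝ)+1)) * N := by
        apply mul_le_mul (min_le_right _ _) (Nat.cast_le.2 hFN) (Nat.cast_nonneg _)
          (by positivity)
      have h4 : (1/((N:ℝ)+1)) * N < 1 := by
        rw [div_mul_eq_mul_div, one_mul, div_lt_one (by positivity)]; linarith
      linarith
    obtain ⟨x₀, hx₀⟩ := hF.2.1
    exact ⟨x₀, hF.1.subset (comp'_subset_of_isol (isol_of_boundary_empty hbe) hx₀)⟩
  have hUdec : ∀ m n : ℕ, m ≤ n → U n ⊆ U m := by
    intro m n hmn x hx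
    exact hx.subset (comp'_mono (by
      have hc : (m:ℝ) ≤ n := Nat.cast_le.2 hmn; linarith) x)
  obtain ⟨x, hx⟩ := exists_mem_of_antitone hUdec (hUfin 0) hUne
  refine ⟨x, finite_of_forall_finite_subset_ncard_le (N := N) ?_⟩
  intro S hS hSfin
  classical
  set g : Z → ℕ := fun y => ⌈(edist x y).toReal⌉₊ with hg
  set m := hSfin.toFinset.sup g with hm
  have hSsub : S ⊆ comp' (R₀ + m) x := by
    intro y hy
    apply mem_comp'_of_edist_le
    have hne : edist x y ≠ ⊤ := hS hy
    rw [ENNReal.le_ofReal_iff_toReal_le hne (by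
      have h0 : (0:ℝ) ≤ m := Nat.cast_nonneg m; linarith)]
    have h1 : (edist x y).toReal ≤ g y := Nat.le_ceil _
    have h2 : (g y : ℝ) ≤ m := Nat.cast_le.2 (Finset.le_sup (hSfin.mem_toFinset.2 hy))
    linarith
  have hcfin : (comp' (R₀ + m) x).Finite := hx m
  calc S.ncard ≤ (comp' (R₀ + m) x).ncard := Set.ncard_le_ncard hSsub hcfin
    _ ≤ N := key m _ hcfin ⟨x, mem_comp'_self _ _⟩ (comp'_isol _ _)

end Stmt6Aux

open Stmt6Aux

theorem stmt6 {X : Type*} [EMetricSpace X] [Infinite X] (hlf : LocallyFiniteEMS X) :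
    (Amenable X ∧ ¬ ProperlyAmenable X) ↔
      ∃ Y₁ Y₂ : Set X, Y₁ ∪ Y₂ = Set.univ ∧ Disjoint Y₁ Y₂ ∧
        Y₁.Finite ∧ Y₁.Nonempty ∧ ¬ Amenable ↥Y₂ ∧
        ∀ x ∈ Y₁, ∀ y ∈ Y₂, edist x y = ⊤ := by
  constructor
  · rintro ⟨hamX, hnpa⟩
    rw [ProperlyAmenable] at hnpa
    push_neg at hnpa
    obtain ⟨R₀, hR₀, ε₀, hε₀, A₀, hA₀fin, hA₀⟩ := hnpa
    set ε₁ := ε₀ / 2 with hε₁def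
    have hε₁ : 0 < ε₁ := by positivity
    set B := ⋃ a ∈ A₀, {z : X | edist a z ≤ ENNReal.ofReal R₀} with hBdef
    have hBfin : B.Finite := hA₀fin.biUnion (fun a _ => hlf a R₀)
    -- Step 1: Følner sets at scale (R₀, ε₁) have bounded cardinality
    obtain ⟨N, hbd⟩ : ∃ N : ℕ, ∀ F : Set X, IsFolnerSet R₀ ε₁ F → F.ncard ≤ N := by
      by_contra hc
      push_neg at hc
      obtain ⟨F, hF, hFcard⟩ := hc ⌈(2 * B.ncard) / ε₀⌉₊
      have hMle : (B.ncard : ℝ) ≤ ε₁ * F.ncard := by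
        have h1 : ((2 * B.ncard : ℝ)) / ε₀ ≤ (⌈(2 * B.ncard : ℝ) / ε₀⌉₊ : ℝ) := by
          apply Nat.le_ceil
        have h2 : ((⌈(2 * (B.ncard:ℝ)) / ε₀⌉₊ : ℝ)) ≤ F.ncard := by
          exact_mod_cast le_of_lt (by exact_mod_cast hFcard)
        have h3 : (2 * (B.ncard:ℝ)) / ε₀ ≤ F.ncard := by
          calc (2 * (B.ncard:ℝ)) / ε₀ ≤ (⌈(2 * (B.ncard:ℝ)) / ε₀⌉₊ : ℝ) := Nat.le_ceil _
            _ ≤ F.ncard := h2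
        rw [hε₁def]
        rw [div_le_iff₀ hε₀] at h3
        linarith
      apply hA₀ (F ∪ A₀) _ subset_union_right
      have hsub : rBoundary R₀ (F ∪ A₀) ⊆ rBoundary R₀ F ∪ B := by
        rintro x ⟨⟨y, hy, hxy⟩, ⟨z, hz, hxz⟩⟩
        rcases hy with hyF | hyA
        · exact Or.inl ⟨⟨y, hyF, hxy⟩, ⟨z, fun h => hz (Or.inl h), hxz⟩⟩
        · exact Or.inr (mem_biUnion hyA (by rw [mem_setOf_eq, edist_comm]; exact hxy))
      have hufin : F.Finite := hF.1
      refine ⟨hufin.union hA₀fin, hF.2.1.mono subset_union_left, ?_⟩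
      have hn1 : (rBoundary R₀ (F ∪ A₀)).ncard ≤ (rBoundary R₀ F ∪ B).ncard :=
        Set.ncard_le_ncard hsub ((bdry_finite hlf hufin R₀).union hBfin)
      have hn2 : (rBoundary R₀ F ∪ B).ncard ≤ (rBoundary R₀ F).ncard + B.ncard :=
        Set.ncard_union_le _ _
      have hn3 : (F.ncard : ℝ) ≤ ((F ∪ A₀).ncard : ℝ) := by
        exact_mod_cast Set.ncard_le_ncard subset_union_left (hufin.union hA₀fin)
      have hn4 : ((rBoundary R₀ F).ncard : ℝ) ≤ ε₁ * F.ncard := hF.2.2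
      have hn5 : ε₀ * (F.ncard : ℝ) ≤ ε₀ * ((F ∪ A₀).ncard : ℝ) :=
        mul_le_mul_of_nonneg_left hn3 hε₀.le
      have hn6 : ((rBoundary R₀ (F ∪ A₀)).ncard : ℝ)
          ≤ ((rBoundary R₀ F).ncard : ℝ) + (B.ncard : ℝ) := by
        exact_mod_cast le_trans hn1 hn2
      rw [hε₁def] at hn4 hMle
      linarith
    -- Step 2: define Y₁ as the union of finite ∞-components
    set Y₁ := {x : X | (compI x).Finite} with hY₁def
    have hcross : ∀ x ∈ Y₁, ∀ y ∈ Y₁ᶜ, edist x y = ⊤ := by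
      intro x hx y hy
      by_contra hne
      exact hy (hx.subset (compI_subset_of_ne_top hne))
    have hY₁fin : Y₁.Finite := by
      apply finite_of_forall_finite_subset_ncard_le (N := N)
      intro S hS hSfin
      rcases S.eq_empty_or_nonempty with rfl | hSne
      · simp
      have hWfin : (⋃ x ∈ S, compI x).Finite := hSfin.biUnion (fun x hx => hS hx)
      have hsub : S ⊆ ⋃ x ∈ S, compI x := fun x hx => mem_biUnion hx (mem_compI_self x)
      have hWcard := hbd _ ((isol_biUnion (fun x (_ : x ∈ S) => compI_isol R₀ x)).folner
        le_rfl hε₁.le hWfin (hSne.mono hsub))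
      exact le_trans (Set.ncard_le_ncard hsub hWfin) hWcard
    have hY₁ne : Y₁.Nonempty := core hlf hR₀ hε₁ N hbd hamX
    have hna : ¬ Amenable ↥(Y₁ᶜ) := by
      intro ham2
      have hcross' : ∀ x ∈ Y₁ᶜ, ∀ y, y ∉ Y₁ᶜ → edist x y = ⊤ := by
        intro x hx y hy
        rw [edist_comm]
        exact hcross y (not_not.1 hy) x hx
      have hlf₂ := hlf_subtype hlf (Y₁ᶜ)
      have hbd₂ : ∀ G : Set ↥(Y₁ᶜ), IsFolnerSet R₀ ε₁ G → G.ncard ≤ N := by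
        intro G hG
        have hh := hbd _ (folner_image hlf₂ hcross' hG)
        rwa [Set.ncard_image_of_injective _ Subtype.val_injective] at hh
      obtain ⟨x, hx⟩ := core hlf₂ hR₀ hε₁ N hbd₂ ham2
      have hsub : compI (x : X) ⊆ Subtype.val '' compI x := by
        intro y hy
        have hyY : y ∈ Y₁ᶜ := by
          intro hyY1
          exact hy (by rw [edist_comm]; exact hcross y hyY1 x.1 x.2)
        refine ⟨⟨y, hyY⟩, ?_, rfl⟩
        show edist x (⟨y, hyY⟩ : ↥(Y₁ᶜ)) ≠ ⊤
        rw [Subtype.edist_eq]; exact hy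
      exact x.2 ((hx.image _).subset hsub)
    exact ⟨Y₁, Y₁ᶜ, union_compl_self Y₁, disjoint_compl_right, hY₁fin, hY₁ne, hna,
      fun x hx y hy => hcross x hx y hy⟩
  · rintro ⟨Y₁, Y₂, hunion, hdisj, hY₁fin, hY₁ne, hY₂na, hcross⟩
    have hY₂ : Y₂ = Y₁ᶜ := by
      apply Set.Subset.antisymm
      · intro x hx hx1
        exact Set.disjoint_left.1 hdisj hx1 hx
      · intro x hx
        rcases (hunion ▸ Set.mem_univ x : x ∈ Y₁ ∪ Y₂) with h | h
        · exact absurd h hx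
        · exact h
    constructor
    · intro R hR ε hε
      refine ⟨Y₁, hY₁fin, hY₁ne, ?_⟩
      have hbe : rBoundary R Y₁ = ∅ := by
        ext x
        simp only [rBoundary, mem_setOf_eq, mem_empty_iff_false, iff_false, not_and]
        rintro ⟨y, hy, hxy⟩ ⟨z, hz, hxz⟩
        have hx : x ∈ Y₁ := by
          by_contra hx
          have ht : edist y x = ⊤ := hcross y hy x (by rw [hY₂]; exact hx)
          rw [edist_comm] at hxy
          rw [ht] at hxy; simp at hxy
        have ht : edist x z = ⊤ := hcross x hx z (by rw [hY₂]; exact hz)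
        rw [ht] at hxz; simp at hxz
      rw [hbe]
      simpa using mul_nonneg hε.le (Nat.cast_nonneg _)
    · intro hpa
      apply hY₂na
      intro R hR ε hε
      have hY₂ne : Y₂.Nonempty := by
        rw [hY₂]
        exact (hY₁fin.infinite_compl).nonempty
      obtain ⟨z, hz⟩ := hY₂ne
      set k := Y₁.ncard with hk
      have hk1 : 0 < k := (Set.ncard_pos hY₁fin).2 hY₁ne
      have hkpos : (0:ℝ) < (k:ℝ) + 1 := by positivity
      have hεk : 0 < ε / ((k:ℝ) + 1) := by positivity
      obtain ⟨F, hF, hAF⟩ := hpa R hR (ε / ((k:ℝ) + 1)) hεk (Y₁ ∪ {z})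
        (hY₁fin.union (Set.finite_singleton z))
      set G : Set ↥Y₂ := Subtype.val ⁻¹' F with hG
      have hzF : z ∈ F := hAF (Or.inr rfl)
      have hGfin : G.Finite := Set.Finite.preimage (Subtype.val_injective.injOn) hF.1
      have hGne : G.Nonempty := ⟨⟨z, hz⟩, hzF⟩
      refine ⟨G, hGfin, hGne, ?_⟩
      have hdbfin : (rBoundary R F).Finite := bdry_finite hlf hF.1 R
      have h1 : ((rBoundary R G).ncard : ℝ) ≤ ((rBoundary R F).ncard : ℝ) := by
        rw [← Set.ncard_image_of_injective (rBoundary R G) Subtype.val_injective]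
        exact_mod_cast Set.ncard_le_ncard (boundary_preimage_subset R F) hdbfin
      have hvalG : Subtype.val '' G = F ∩ Y₂ := by
        rw [hG, Subtype.image_preimage_coe, Set.inter_comm]
      have hGcard : G.ncard = (F ∩ Y₂).ncard := by
        rw [← hvalG, Set.ncard_image_of_injective _ Subtype.val_injective]
      have hFY₂fin : (F ∩ Y₂).Finite := hF.1.inter_of_left _
      have hFsub : F ⊆ Y₁ ∪ (F ∩ Y₂) := by
        intro x hxF
        rcases (hunion ▸ Set.mem_univ x : x ∈ Y₁ ∪ Y₂) with h | h
        · exact Or.inl h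
        · exact Or.inr ⟨hxF, h⟩
      have hFle : F.ncard ≤ k + (F ∩ Y₂).ncard :=
        le_trans (Set.ncard_le_ncard hFsub (hY₁fin.union hFY₂fin)) (Set.ncard_union_le _ _)
      have hG1 : 1 ≤ (F ∩ Y₂).ncard := by
        have := (Set.ncard_pos hFY₂fin).2 ⟨z, hzF, hz⟩
        omega
      have h3 : (F.ncard : ℝ) ≤ ((k:ℝ) + 1) * ((F ∩ Y₂).ncard : ℝ) := by
        have ha : (F.ncard : ℝ) ≤ (k:ℝ) + ((F ∩ Y₂).ncard : ℝ) := by exact_mod_cast hFle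
        have hb : (1:ℝ) ≤ ((F ∩ Y₂).ncard : ℝ) := by exact_mod_cast hG1
        nlinarith
      have h2 : ((rBoundary R F).ncard : ℝ) ≤ ε / ((k:ℝ) + 1) * F.ncard := hF.2.2
      calc ((rBoundary R G).ncard : ℝ)
          ≤ ε / ((k:ℝ) + 1) * F.ncard := h1.trans h2
        _ ≤ ε / ((k:ℝ) + 1) * (((k:ℝ) + 1) * ((F ∩ Y₂).ncard : ℝ)) :=
            mul_le_mul_of_nonneg_left h3 hεk.le
        _ = ε * ((F ∩ Y₂).ncard : ℝ) := by field_simp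
        _ = ε * (G.ncard : ℝ) := by rw [hGcard]
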